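/- Let ξ, ξ̂ : [0,∞) → ℝ be continuous with ξ(0) = ξ̂(0) = 0, 0 ≤ ξ, ξ̂ ≤ 1, ξ̂(r) = 1 for r ≥ 1, and suppose ∫₁^∞ (1 − ξ(s))/s ds = ∞. Set h(r) = exp(-∫₀ʳ ξ/s ds), ĥ(r) = exp(-∫₀ʳ ξ̂/s ds), and ĥ_k(r) = (1/k)ĥ(r/k). Then for every ε > 0 there exists k ≥ 1 such that h(r) ≥ (1/ε)·ĥ_k(r) for all r ≥ 0. -/

import Mathlib

open MeasureTheory intervalIntegral Filter

/-- under the divergence condition of (c2), `h` dominates `(1/ε)·ĥ_k`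
for a suitable rescaling `ĥ_k`. -/
theorem stmt_14 (ξ ξ' : ℝ → ℝ) (hξc : Continuous ξ) (hξ'c : Continuous ξ')
    (hξ0 : ξ 0 = 0) (hξ'0 : ξ' 0 = 0)
    (hξ01 : ∀ r, 0 ≤ ξ r ∧ ξ r ≤ 1) (hξ'01 : ∀ r, 0 ≤ ξ' r ∧ ξ' r ≤ 1)
    (hξ'1 : ∀ r : ℝ, 1 ≤ r → ξ' r = 1)
    (hint : ∀ r > (0:ℝ), IntervalIntegrable (fun s => ξ s / s) volume 0 r)
    (hint' : ∀ r > (0:ℝ), IntervalIntegrable (fun s => ξ' s / s) volume 0 r)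
    (hdiv : Tendsto (fun r => ∫ s in (1:ℝ)..r, (1 - ξ s) / s) atTop atTop)
    (h h' : ℝ → ℝ)
    (hh : ∀ r, h r = Real.exp (-∫ s in (0:ℝ)..r, ξ s / s))
    (hh' : ∀ r, h' r = Real.exp (-∫ s in (0:ℝ)..r, ξ' s / s)) :
    ∀ ε > (0:ℝ), ∃ k : ℝ, 1 ≤ k ∧
      ∀ r : ℝ, 0 ≤ r → (1 / ε) * ((1 / k) * h' (r / k)) ≤ h r := by
  intro ε hε
  set F : ℝ → ℝ := fun r => ∫ s in (0:ℝ)..r, ξ s / s with hFdef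
  set F' : ℝ → ℝ := fun r => ∫ s in (0:ℝ)..r, ξ' s / s with hF'def
  set D : ℝ → ℝ := fun r => ∫ s in (1:ℝ)..r, (1 - ξ s) / s with hDdef
  -- monotonicity of F
  have hFmono : ∀ a b : ℝ, 0 ≤ a → a ≤ b → F a ≤ F b := by
    intro a b ha hab
    rcases eq_or_lt_of_le (ha.trans hab) with hb | hb
    · have : a = 0 := le_antisymm (hab.trans hb.symm.le) ha
      rw [this, ← hb]
    · have hib := hint b hb
      have hi0a : IntervalIntegrable (fun s => ξ s / s) volume 0 a :=
        hib.mono_set (by rw [Set.uIcc_of_le ha, Set.uIcc_of_le (ha.trans hab)]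
                         exact Set.Icc_subset_Icc le_rfl hab)
      have hiab : IntervalIntegrable (fun s => ξ s / s) volume a b :=
        hib.mono_set (by rw [Set.uIcc_of_le hab, Set.uIcc_of_le (ha.trans hab)]
                         exact Set.Icc_subset_Icc ha le_rfl)
      have hadd := integral_add_adjacent_intervals hi0a hiab
      have hnn : 0 ≤ ∫ s in a..b, ξ s / s :=
        intervalIntegral.integral_nonneg hab
          (fun s hs => div_nonneg (hξ01 s).1 (ha.trans hs.1))
      have : F b = F a + ∫ s in a..b, ξ s / s := by
        simp only [hFdef]; rw [← hadd]
      linarith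
  have hF'mono : ∀ a b : ℝ, 0 ≤ a → a ≤ b → F' a ≤ F' b := by
    intro a b ha hab
    rcases eq_or_lt_of_le (ha.trans hab) with hb | hb
    · have : a = 0 := le_antisymm (hab.trans hb.symm.le) ha
      rw [this, ← hb]
    · have hib := hint' b hb
      have hi0a : IntervalIntegrable (fun s => ξ' s / s) volume 0 a :=
        hib.mono_set (by rw [Set.uIcc_of_le ha, Set.uIcc_of_le (ha.trans hab)]
                         exact Set.Icc_subset_Icc le_rfl hab)
      have hiab : IntervalIntegrable (fun s => ξ' s / s) volume a b :=
        hib.mono_set (by rw [Set.uIcc_of_le hab, Set.uIcc_of_le (ha.trans hab)]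
                         exact Set.Icc_subset_Icc ha le_rfl)
      have hadd := integral_add_adjacent_intervals hi0a hiab
      have hnn : 0 ≤ ∫ s in a..b, ξ' s / s :=
        intervalIntegral.integral_nonneg hab
          (fun s hs => div_nonneg (hξ'01 s).1 (ha.trans hs.1))
      have : F' b = F' a + ∫ s in a..b, ξ' s / s := by
        simp only [hF'def]; rw [← hadd]
      linarith
  have hF0 : F 0 = 0 := by simp [hFdef]
  have hF'0 : F' 0 = 0 := by simp [hF'def]
  have hF'nn : ∀ r, 0 ≤ r → 0 ≤ F' r := fun r hr => hF'0 ▸ hF'mono 0 r le_rfl hr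
  -- h' ≤ 1 on [0,∞)
  have hh'le1 : ∀ x : ℝ, 0 ≤ x → h' x ≤ 1 := by
    intro x hx
    rw [hh' x]
    exact Real.exp_le_one_iff.mpr (by simpa using hF'nn x hx)
  -- decay of h' : h' x ≤ 1/x for x ≥ 1
  have hh'decay : ∀ x : ℝ, 1 ≤ x → h' x ≤ 1 / x := by
    intro x hx
    have h1x : (0:ℝ) < x := lt_of_lt_of_le one_pos hx
    have hi01 : IntervalIntegrable (fun s => ξ' s / s) volume 0 1 :=
      (hint' x h1x).mono_set (by rw [Set.uIcc_of_le zero_le_one, Set.uIcc_of_le h1x.le]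
                                 exact Set.Icc_subset_Icc le_rfl hx)
    have hi1x : IntervalIntegrable (fun s => ξ' s / s) volume 1 x :=
      (hint' x h1x).mono_set (by rw [Set.uIcc_of_le hx, Set.uIcc_of_le h1x.le]
                                 exact Set.Icc_subset_Icc zero_le_one le_rfl)
    have hsplit : F' x = F' 1 + ∫ s in (1:ℝ)..x, ξ' s / s := by
      simp only [hF'def]; rw [← integral_add_adjacent_intervals hi01 hi1x]
    have hcongr : (∫ s in (1:ℝ)..x, ξ' s / s) = ∫ s in (1:ℝ)..x, 1 / s := by
      apply intervalIntegral.integral_congr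
      intro s hs
      rw [Set.uIcc_of_le hx] at hs
      show ξ' s / s = 1 / s
      rw [hξ'1 s hs.1]
    have hlog : (∫ s in (1:ℝ)..x, 1 / s) = Real.log x := by
      rw [integral_one_div (by
        rw [Set.uIcc_of_le hx]; intro hmem; exact absurd hmem.1 (by norm_num))]
      simp
    have hFx : F' x = F' 1 + Real.log x := by rw [hsplit, hcongr, hlog]
    rw [hh' x]
    have : Real.exp (-F' x) = Real.exp (-F' 1) * (1 / x) := by
      rw [hFx, neg_add, Real.exp_add]
      congr 1
      rw [Real.exp_neg, Real.exp_log h1x, one_div]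
    calc Real.exp (-(∫ s in (0:ℝ)..x, ξ' s / s)) = Real.exp (-F' x) := rfl
      _ = Real.exp (-F' 1) * (1 / x) := this
      _ ≤ 1 * (1 / x) := by
          apply mul_le_mul_of_nonneg_right _ (by positivity)
          exact Real.exp_le_one_iff.mpr (by simpa using hF'nn 1 zero_le_one)
      _ = 1 / x := one_mul _
  -- representation of h for r ≥ 1
  have hrep : ∀ r : ℝ, 1 ≤ r → h r = Real.exp (D r - F 1) / r := by
    intro r hr
    have h1r : (0:ℝ) < r := lt_of_lt_of_le one_pos hr
    have hi01 : IntervalIntegrable (fun s => ξ s / s) volume 0 1 :=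
      (hint r h1r).mono_set (by rw [Set.uIcc_of_le zero_le_one, Set.uIcc_of_le h1r.le]
                                exact Set.Icc_subset_Icc le_rfl hr)
    have hi1r : IntervalIntegrable (fun s => ξ s / s) volume 1 r :=
      (hint r h1r).mono_set (by rw [Set.uIcc_of_le hr, Set.uIcc_of_le h1r.le]
                                exact Set.Icc_subset_Icc zero_le_one le_rfl)
    have hsplit : F r = F 1 + ∫ s in (1:ℝ)..r, ξ s / s := by
      simp only [hFdef]; rw [← integral_add_adjacent_intervals hi01 hi1r]
    have hiD : IntervalIntegrable (fun s => (1 - ξ s) / s) volume 1 r := by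
      apply ContinuousOn.intervalIntegrable
      apply ContinuousOn.div ((continuous_const.sub hξc).continuousOn) continuousOn_id
      intro s hs
      rw [Set.uIcc_of_le hr] at hs
      exact ne_of_gt (lt_of_lt_of_le one_pos hs.1)
    have hadd : (∫ s in (1:ℝ)..r, ξ s / s) + D r = ∫ s in (1:ℝ)..r, 1 / s := by
      simp only [hDdef]
      rw [← intervalIntegral.integral_add hi1r hiD]
      apply intervalIntegral.integral_congr
      intro s hs
      rw [Set.uIcc_of_le hr] at hs
      have hs0 : s ≠ 0 := ne_of_gt (lt_of_lt_of_le one_pos hs.1)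
      field_simp
      ring
    have hlog : (∫ s in (1:ℝ)..r, 1 / s) = Real.log r := by
      rw [integral_one_div (by
        rw [Set.uIcc_of_le hr]; intro hmem; exact absurd hmem.1 (by norm_num))]
      simp
    have hFr : F r = F 1 + Real.log r - D r := by
      rw [hsplit]; rw [hlog] at hadd; linarith
    rw [hh r]
    calc Real.exp (-(∫ s in (0:ℝ)..r, ξ s / s)) = Real.exp (-F r) := rfl
      _ = Real.exp (D r - F 1) / r := by
          rw [hFr]
          rw [show -(F 1 + Real.log r - D r) = (D r - F 1) + (-Real.log r) by ring,
            Real.exp_add, Real.exp_neg, Real.exp_log h1r]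
          rw [div_eq_mul_inv]
  -- choose R₀
  obtain ⟨R₁, hR₁⟩ := eventually_atTop.mp (Filter.tendsto_atTop.mp hdiv (F 1 + Real.log (1/ε)))
  set R₀ : ℝ := max R₁ 1 with hR₀def
  have hR₀1 : (1:ℝ) ≤ R₀ := le_max_right _ _
  have hlower : ∀ r : ℝ, R₀ ≤ r → 1 / (ε * r) ≤ h r := by
    intro r hrR
    have hr1 : (1:ℝ) ≤ r := hR₀1.trans hrR
    have hr0 : (0:ℝ) < r := lt_of_lt_of_le one_pos hr1
    have hDr : F 1 + Real.log (1/ε) ≤ D r := hR₁ r ((le_max_left _ _).trans hrR)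
    rw [hrep r hr1]
    rw [div_le_div_iff₀ (by positivity) hr0]
    have : 1 / ε ≤ Real.exp (D r - F 1) := by
      calc 1/ε = Real.exp (Real.log (1/ε)) := (Real.exp_log (by positivity)).symm
        _ ≤ Real.exp (D r - F 1) := Real.exp_le_exp.mpr (by linarith)
    calc 1 * r = (ε * r) * (1/ε) := by field_simp
      _ ≤ (ε * r) * Real.exp (D r - F 1) := mul_le_mul_of_nonneg_left this (by positivity)
      _ = Real.exp (D r - F 1) * (ε * r) := by ring
  have hc0 : 0 < h R₀ := by rw [hh]; exact Real.exp_pos _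
  set k : ℝ := max 1 (max R₀ (1 / (ε * h R₀))) with hkdef
  have hk1 : (1:ℝ) ≤ k := le_max_left _ _
  have hk0 : (0:ℝ) < k := lt_of_lt_of_le one_pos hk1
  have hkR₀ : R₀ ≤ k := (le_max_left _ _).trans (le_max_right _ _)
  have hkc : 1 / (ε * h R₀) ≤ k := (le_max_right _ _).trans (le_max_right _ _)
  refine ⟨k, hk1, ?_⟩
  intro r hr
  rcases le_or_gt r k with hrk | hrk
  · -- r ≤ k : LHS ≤ 1/(εk)
    have hLHS : (1/ε) * ((1/k) * h' (r/k)) ≤ 1 / (ε * k) := by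
      have h1 := hh'le1 (r/k) (by positivity)
      have h2 : (1/ε) * ((1/k) * h' (r/k)) ≤ (1/ε) * ((1/k) * 1) :=
        mul_le_mul_of_nonneg_left
          (mul_le_mul_of_nonneg_left h1 (by positivity)) (by positivity)
      calc (1/ε) * ((1/k) * h' (r/k)) ≤ (1/ε) * ((1/k) * 1) := h2
        _ = 1 / (ε * k) := by rw [mul_one, div_mul_div_comm, one_mul]
    rcases le_or_gt r R₀ with hrR | hrR
    · -- small r : h r ≥ h R₀ ≥ 1/(εk)
      have hmono : h R₀ ≤ h r := by
        rw [hh, hh]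
        exact Real.exp_le_exp.mpr (neg_le_neg (hFmono r R₀ hr hrR))
      have : 1 / (ε * k) ≤ h R₀ := by
        rw [div_le_iff₀ (by positivity)]
        calc (1:ℝ) = (1 / (ε * h R₀)) * (ε * h R₀) := by field_simp
          _ ≤ k * (ε * h R₀) := by
              apply mul_le_mul_of_nonneg_right hkc (mul_pos hε hc0).le
          _ = h R₀ * (ε * k) := by ring
      linarith
    · -- R₀ ≤ r ≤ k
      have h1 : 1 / (ε * k) ≤ 1 / (ε * r) := by
        have hr0' : (0:ℝ) < r := lt_of_lt_of_le (lt_of_lt_of_le one_pos hR₀1) hrR.le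
        apply one_div_le_one_div_of_le (mul_pos hε hr0')
        exact mul_le_mul_of_nonneg_left hrk hε.le
      have h2 := hlower r hrR.le
      linarith
  · -- r ≥ k : use decay
    have hr1 : (1:ℝ) ≤ r / k := (one_le_div hk0).mpr hrk.le
    have hr0 : (0:ℝ) < r := lt_of_lt_of_le hk0 hrk.le
    have hdec := hh'decay (r/k) hr1
    have hLHS : (1/ε) * ((1/k) * h' (r/k)) ≤ 1 / (ε * r) := by
      have h'nn : 0 ≤ h' (r/k) := by rw [hh']; exact (Real.exp_pos _).le
      have : (1/k) * h' (r/k) ≤ 1 / r := by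
        calc (1/k) * h' (r/k) ≤ (1/k) * (1/(r/k)) :=
              mul_le_mul_of_nonneg_left hdec (by positivity)
          _ = 1 / r := by field_simp
      calc (1/ε) * ((1/k) * h' (r/k)) ≤ (1/ε) * (1/r) :=
            mul_le_mul_of_nonneg_left this (by positivity)
        _ = 1 / (ε * r) := by field_simp
    have h2 := hlower r (hkR₀.trans hrk.le)
    linarith
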